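/- Let G be a strongly connected simple digraph on n ≥ 2 vertices and α ∈ [0,1). Then 1 ≤ λ_α(G) ≤ n−1; moreover λ_α(G) = n−1 if and only if G is the complete digraph on n vertices, and λ_α(G) = 1 if and only if G is the directed cycle on n vertices. -/

import Mathlib

open scoped Classical
open Matrix

/-- Spectral radius: largest modulus of (complex) eigenvalues, i.e. roots of the
characteristic polynomial of the complexified matrix. -/
noncomputable def specRad {m : Type*} [Fintype m] [DecidableEq m] (M : Matrix m m ℝ) : ℝ :=
  sSup {r : ℝ | ∃ μ : ℂ, (M.map Complex.ofReal).charpoly.IsRoot μ ∧ r = ‖μ‖}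

/-- Irreducibility of a matrix: the associated digraph is strongly connected. -/
def Irred {n : ℕ} (M : Matrix (Fin n) (Fin n) ℝ) : Prop :=
  ∀ i j : Fin n, Relation.ReflTransGen (fun a b => M a b ≠ 0) i j

/-- Outdegree of a vertex in a digraph on `Fin n`. -/
noncomputable def outdeg {n : ℕ} (G : Fin n → Fin n → Prop) (i : Fin n) : ℕ :=
  (Finset.univ.filter (fun j => G i j)).card

/-- Indegree of a vertex. -/
noncomputable def indeg {n : ℕ} (G : Fin n → Fin n → Prop) (i : Fin n) : ℕ :=
  (Finset.univ.filter (fun j => G j i)).card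

/-- The matrix `A_α(G) = α D(G) + (1-α) A(G)`. -/
noncomputable def Aalpha {n : ℕ} (α : ℝ) (G : Fin n → Fin n → Prop) :
    Matrix (Fin n) (Fin n) ℝ :=
  α • Matrix.diagonal (fun i => (outdeg G i : ℝ)) +
    (1 - α) • (Matrix.of fun i j => if G i j then (1 : ℝ) else 0)

/-- The `A_α` spectral radius of a digraph. -/
noncomputable def lamAlpha {n : ℕ} (α : ℝ) (G : Fin n → Fin n → Prop) : ℝ :=
  specRad (Aalpha α G)

/-- Strong connectivity of a digraph. -/
def SConn {n : ℕ} (G : Fin n → Fin n → Prop) : Prop :=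
  ∀ u v : Fin n, Relation.ReflTransGen G u v

/-- Isomorphism of digraphs on `Fin n`. -/
def DIso {n : ℕ} (G H : Fin n → Fin n → Prop) : Prop :=
  ∃ e : Equiv.Perm (Fin n), ∀ u v, G u v ↔ H (e u) (e v)

/-- The directed cycle on `Fin n`. -/
def dirCycle (n : ℕ) : Fin n → Fin n → Prop :=
  fun i j => j.val = (i.val + 1) % n


/-- Deleting a set of vertices from a digraph. -/
def delVerts {n : ℕ} (G : Fin n → Fin n → Prop) (S : Finset (Fin n)) :
    Fin n → Fin n → Prop :=
  fun a b => G a b ∧ a ∉ S ∧ b ∉ S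

/-- The digraph obtained by deleting the vertices of `S` is strongly connected. -/
def SConnAvoid {n : ℕ} (G : Fin n → Fin n → Prop) (S : Finset (Fin n)) : Prop :=
  ∀ u v : Fin n, u ∉ S → v ∉ S → Relation.ReflTransGen (delVerts G S) u v

/-- The vertex connectivity of `G` equals `k`. -/
def vertexConnIs {n : ℕ} (G : Fin n → Fin n → Prop) (k : ℕ) : Prop :=
  (∃ S : Finset (Fin n), S.card = k ∧ ¬ SConnAvoid G S) ∧
    ∀ S : Finset (Fin n), ¬ SConnAvoid G S → k ≤ S.card

/-- Deleting a set of arcs from a digraph. -/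
def delArcs {n : ℕ} (G : Fin n → Fin n → Prop) (S : Finset (Fin n × Fin n)) :
    Fin n → Fin n → Prop :=
  fun a b => G a b ∧ (a, b) ∉ S

/-- The arc connectivity of `G` equals `k`. -/
def arcConnIs {n : ℕ} (G : Fin n → Fin n → Prop) (k : ℕ) : Prop :=
  (∃ S : Finset (Fin n × Fin n), S.card = k ∧ ¬ SConn (delArcs G S)) ∧
    ∀ S : Finset (Fin n × Fin n), ¬ SConn (delArcs G S) → k ≤ S.card

/-- `G` contains a directed cycle of length `g`. -/
def hasCycleLen {n : ℕ} (G : Fin n → Fin n → Prop) (g : ℕ) : Prop :=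
  ∃ c : Fin g → Fin n, Function.Injective c ∧
    ∀ i : Fin g, G (c i) (c ⟨(i.val + 1) % g, Nat.mod_lt _ i.pos⟩)

/-- The girth of `G` equals `g`. -/
def girthIs {n : ℕ} (G : Fin n → Fin n → Prop) (g : ℕ) : Prop :=
  hasCycleLen G g ∧ ∀ m, 0 < m → m < g → ¬ hasCycleLen G m

/-- The clique number of `G` equals `d`. -/
def cliqueNumIs {n : ℕ} (G : Fin n → Fin n → Prop) (d : ℕ) : Prop :=
  (∃ S : Finset (Fin n), S.card = d ∧ ∀ u ∈ S, ∀ v ∈ S, u ≠ v → G u v ∧ G v u) ∧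
    ∀ S : Finset (Fin n), (∀ u ∈ S, ∀ v ∈ S, u ≠ v → G u v ∧ G v u) → S.card ≤ d

/-- The digraph `C_{n,g}`: the directed cycle `v_1 … v_g v_1` (indices `0,…,g-1`)
together with the directed path `v_g v_{g+1} … v_n v_1`. -/
def Cng (n g : ℕ) : Fin n → Fin n → Prop := fun i j =>
  j.val = i.val + 1 ∨ (i.val = g - 1 ∧ j.val = 0) ∨ (i.val = n - 1 ∧ j.val = 0)

/-- `C'_{n,g} = C_{n,g} - {(v_n, v_1)} + {(v_n, v_g)}`. -/
def Cng' (n g : ℕ) : Fin n → Fin n → Prop := fun i j =>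
  j.val = i.val + 1 ∨ (i.val = g - 1 ∧ j.val = 0) ∨ (i.val = n - 1 ∧ j.val = g - 1)

/-- The digraph `B_{n,d}`: a complete digraph on the `d` vertices
`{0} ∪ {n-d+1, …, n-1}` together with the directed path `v_1 v_2 … v_{n-d+2}`
(indices `0, 1, …, n-d+1`). -/
def Bnd (n d : ℕ) : Fin n → Fin n → Prop := fun i j =>
  (j.val = i.val + 1 ∧ j.val ≤ n - d + 1) ∨
    (i ≠ j ∧ (i.val = 0 ∨ n - d + 1 ≤ i.val) ∧ (j.val = 0 ∨ n - d + 1 ≤ j.val))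

/-- `B'_{n,d} = B_{n,d} - {(v_{n-d+1}, v_{n-d+2})} + {(v_{n-d+1}, v_1)}`. -/
def Bnd' (n d : ℕ) : Fin n → Fin n → Prop := fun i j =>
  (j.val = i.val + 1 ∧ j.val ≤ n - d) ∨ (i.val = n - d ∧ j.val = 0) ∨
    (i ≠ j ∧ (i.val = 0 ∨ n - d + 1 ≤ i.val) ∧ (j.val = 0 ∨ n - d + 1 ≤ j.val))

/-- The digraph `K(n,k,m)`: parts `K_m` (indices `< m`), `K_k` (indices in `[m, m+k)`),
`K_{n-k-m}` (indices `≥ m+k`); all parts complete, `K_k` joined both ways to the others,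
and all one-way arcs from `K_m` to `K_{n-k-m}`. -/
def Knkm (n k m : ℕ) : Fin n → Fin n → Prop := fun i j =>
  i ≠ j ∧ ¬(m + k ≤ i.val ∧ j.val < m)


section Helpers
open Polynomial
open Polynomial Matrix


section SpecFacts
variable {n : ℕ} (M : Matrix (Fin n) (Fin n) ℝ)

lemma map_ofReal_pow (k : ℕ) :
    (M ^ k).map Complex.ofReal = (M.map Complex.ofReal) ^ k := by
  have := map_pow (Complex.ofRealHom.mapMatrix (m := Fin n)) M k
  simp only [RingHom.mapMatrix_apply] at this; exact this

lemma exists_root (hn : 0 < n) :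
    ∃ μ : ℂ, (M.map Complex.ofReal).charpoly.IsRoot μ := by
  apply Complex.exists_root
  have h1 : (M.map Complex.ofReal).charpoly.natDegree = n := by
    rw [Matrix.charpoly_natDegree_eq_dim, Fintype.card_fin]
  rw [Polynomial.degree_eq_natDegree (Matrix.charpoly_monic _).ne_zero, h1]
  exact_mod_cast hn
end SpecFacts


lemma isRoot_charpoly_iff_det {n : ℕ} (A : Matrix (Fin n) (Fin n) ℂ) (μ : ℂ) :
    A.charpoly.IsRoot μ ↔ (scalar (Fin n) μ - A).det = 0 := by
  unfold Matrix.charpoly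
  rw [IsRoot, eval_det, matPolyEquiv_charmatrix, eval_sub, eval_X, eval_C]

lemma scalar_mulVec {n : ℕ} (μ : ℂ) (v : Fin n → ℂ) :
    (scalar (Fin n) μ) *ᵥ v = μ • v := by
  rw [scalar_apply]; ext i; simp [mulVec_diagonal]

lemma isRoot_charpoly_iff_eig {n : ℕ} (A : Matrix (Fin n) (Fin n) ℂ) (μ : ℂ) :
    A.charpoly.IsRoot μ ↔ ∃ v : Fin n → ℂ, v ≠ 0 ∧ A.mulVec v = μ • v := by
  rw [isRoot_charpoly_iff_det, ← Matrix.exists_mulVec_eq_zero_iff]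
  constructor
  · rintro ⟨v, hv, h⟩
    refine ⟨v, hv, ?_⟩
    rw [sub_mulVec, scalar_mulVec, sub_eq_zero] at h
    exact h.symm
  · rintro ⟨v, hv, h⟩
    exact ⟨v, hv, by rw [sub_mulVec, scalar_mulVec, h, sub_self]⟩

lemma root_pow {n : ℕ} (A : Matrix (Fin n) (Fin n) ℂ) (μ : ℂ)
    (h : A.charpoly.IsRoot μ) (k : ℕ) : (A ^ k).charpoly.IsRoot (μ ^ k) := by
  rw [isRoot_charpoly_iff_eig] at h ⊢
  obtain ⟨v, hv, hAv⟩ := h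
  refine ⟨v, hv, ?_⟩
  induction k with
  | zero => simp
  | succ k ih =>
    rw [pow_succ', pow_succ', ← Matrix.mulVec_mulVec, ih, mulVec_smul, hAv,
      smul_smul, mul_comm]

lemma det_scalar_sub_comm {n : ℕ} (A : Matrix (Fin n) (Fin n) ℂ) (μ : ℂ) :
    (scalar (Fin n) μ - A).det = 0 ↔ (A - scalar (Fin n) μ).det = 0 := by
  rw [show A - scalar (Fin n) μ = -(scalar (Fin n) μ - A) from (neg_sub _ _).symm,
    Matrix.det_neg]
  simp

lemma algebraMap_matrix_eq_scalar {n : ℕ} (ν : ℂ) :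
    algebraMap ℂ (Matrix (Fin n) (Fin n) ℂ) ν = scalar (Fin n) ν := rfl

lemma root_pow_inv {n : ℕ} (A : Matrix (Fin n) (Fin n) ℂ) {m : ℕ} (hm : m ≠ 0) (ν : ℂ)
    (h : (A ^ m).charpoly.IsRoot ν) : ∃ μ : ℂ, A.charpoly.IsRoot μ ∧ μ ^ m = ν := by
  rw [isRoot_charpoly_iff_det] at h
  set p : ℂ[X] := X ^ m - C ν with hp
  have hmonic : p.Monic := monic_X_pow_sub_C ν hm
  have hsplit : p.Splits := IsAlgClosed.splits p
  set l : List ℂ := p.roots.toList with hl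
  have hfact : p = (l.map (fun ω => X - C ω)).prod := by
    conv_lhs => rw [hsplit.eq_prod_roots_of_monic hmonic]
    rw [← Multiset.coe_toList p.roots, Multiset.map_coe, Multiset.prod_coe]
  have haev : aeval A p = A ^ m - scalar (Fin n) ν := by
    rw [hp, map_sub, map_pow, aeval_X, aeval_C, algebraMap_matrix_eq_scalar]
  have haev2 : aeval A p = (l.map (fun ω => A - scalar (Fin n) ω)).prod := by
    conv_lhs => rw [hfact]
    rw [map_list_prod (aeval A)]
    congr 1
    rw [List.map_map]
    refine List.map_congr_left fun ω _ => ?_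
    simp only [Function.comp_apply, map_sub, aeval_X, aeval_C, algebraMap_matrix_eq_scalar]
  have hdet : ((l.map (fun ω => A - scalar (Fin n) ω)).map Matrix.det).prod = 0 := by
    rw [← Matrix.coe_detMonoidHom, ← map_list_prod (detMonoidHom (n := Fin n) (R := ℂ)),
      Matrix.coe_detMonoidHom, ← haev2, haev, ← det_scalar_sub_comm, h]
  have h0mem : (0 : ℂ) ∈ ((l.map (fun ω => A - scalar (Fin n) ω)).map Matrix.det) :=
    List.prod_eq_zero_iff.mp hdet
  rw [List.map_map] at h0mem
  obtain ⟨ω, hωmem, hω0⟩ := List.mem_map.mp h0mem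
  have hωroot : p.IsRoot ω := by
    have : ω ∈ p.roots := (Multiset.mem_toList).mp hωmem
    exact isRoot_of_mem_roots this
  refine ⟨ω, ?_, ?_⟩
  · rw [isRoot_charpoly_iff_det, det_scalar_sub_comm]
    exact hω0
  · have := hωroot
    rw [hp, IsRoot, eval_sub, eval_pow, eval_X, eval_C, sub_eq_zero] at this
    exact this

lemma abs_root_le {n : ℕ} (A : Matrix (Fin n) (Fin n) ℂ) (μ : ℂ)
    (h : ∃ v : Fin n → ℂ, v ≠ 0 ∧ A.mulVec v = μ • v) (B : ℝ)
    (hB : ∀ i, ∑ j, ‖A i j‖ ≤ B) :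
    ‖μ‖ ≤ B := by
  obtain ⟨v, hv, hAv⟩ := h
  obtain ⟨i0, hi0⟩ := Function.ne_iff.mp hv
  obtain ⟨i, -, hi⟩ := Finset.exists_max_image Finset.univ (fun j => ‖v j‖)
    ⟨i0, Finset.mem_univ i0⟩
  have hvi : 0 < ‖v i‖ :=
    lt_of_lt_of_le (by simpa using hi0) (hi i0 (Finset.mem_univ i0))
  have key : ‖μ‖ * ‖v i‖ ≤ B * ‖v i‖ := by
    have h1 : μ * v i = (A.mulVec v) i := by rw [hAv]; simp
    calc ‖μ‖ * ‖v i‖ = ‖μ * v i‖ := (norm_mul _ _).symm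
      _ = ‖∑ j, A i j * v j‖ := by rw [h1]; rfl
      _ ≤ ∑ j, ‖A i j * v j‖ := norm_sum_le _ _
      _ ≤ ∑ j, ‖A i j‖ * ‖v i‖ := by
          refine Finset.sum_le_sum fun j _ => ?_
          rw [norm_mul]
          exact mul_le_mul_of_nonneg_left (hi j (Finset.mem_univ j)) (norm_nonneg _)
      _ = (∑ j, ‖A i j‖) * ‖v i‖ := by rw [Finset.sum_mul]
      _ ≤ B * ‖v i‖ := mul_le_mul_of_nonneg_right (hB i) hvi.le
  exact le_of_mul_le_mul_right key hvi

section RowSum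
variable {n : ℕ}

def rowSum (M : Matrix (Fin n) (Fin n) ℝ) (i : Fin n) : ℝ := ∑ j, M i j

lemma rowSum_mul (A B : Matrix (Fin n) (Fin n) ℝ) (i : Fin n) :
    rowSum (A * B) i = ∑ l, A i l * rowSum B l := by
  unfold rowSum
  simp only [mul_apply, Finset.mul_sum]
  rw [Finset.sum_comm]

lemma pow_entry_nonneg {M : Matrix (Fin n) (Fin n) ℝ} (hM : ∀ i j, 0 ≤ M i j) (k : ℕ) :
    ∀ i j, 0 ≤ (M ^ k) i j := by
  induction k with
  | zero => intro i j; by_cases h : i = j <;> simp [pow_zero, one_apply, h]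
  | succ k ih =>
    intro i j
    rw [pow_succ, mul_apply]
    exact Finset.sum_nonneg fun l _ => mul_nonneg (ih i l) (hM l j)

lemma rowSum_pow_le {M : Matrix (Fin n) (Fin n) ℝ} (hM : ∀ i j, 0 ≤ M i j)
    {S : ℝ} (hS0 : 0 ≤ S) (hS : ∀ i, rowSum M i ≤ S) (k : ℕ) :
    ∀ i, rowSum (M ^ k) i ≤ S ^ k := by
  induction k with
  | zero => intro i; rw [pow_zero, pow_zero]; unfold rowSum; simp [one_apply]
  | succ k ih =>
    intro i
    rw [pow_succ', pow_succ', rowSum_mul]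
    calc ∑ l, M i l * rowSum (M ^ k) l ≤ ∑ l, M i l * S ^ k :=
          Finset.sum_le_sum fun l _ => mul_le_mul_of_nonneg_left (ih l) (hM i l)
      _ = rowSum M i * S ^ k := by rw [← Finset.sum_mul]; rfl
      _ ≤ S * S ^ k := mul_le_mul_of_nonneg_right (hS i) (pow_nonneg hS0 k)

lemma rowSum_pow_ge {M : Matrix (Fin n) (Fin n) ℝ} (hM : ∀ i j, 0 ≤ M i j)
    {s : ℝ} (hs0 : 0 ≤ s) (hs : ∀ i, s ≤ rowSum M i) (k : ℕ) :
    ∀ i, s ^ k ≤ rowSum (M ^ k) i := by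
  induction k with
  | zero => intro i; rw [pow_zero, pow_zero]; unfold rowSum; simp [one_apply]
  | succ k ih =>
    intro i
    rw [pow_succ', pow_succ', rowSum_mul]
    calc s * s ^ k ≤ rowSum M i * s ^ k :=
          mul_le_mul_of_nonneg_right (hs i) (pow_nonneg hs0 k)
      _ = ∑ l, M i l * s ^ k := by rw [← Finset.sum_mul]; rfl
      _ ≤ ∑ l, M i l * rowSum (M ^ k) l :=
          Finset.sum_le_sum fun l _ => mul_le_mul_of_nonneg_left (ih l) (hM i l)

/-- step version with general period t -/
lemma rowSum_pow_mul_ge {M : Matrix (Fin n) (Fin n) ℝ} (hM : ∀ i j, 0 ≤ M i j)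
    {t : ℕ} {q : ℝ} (hq0 : 0 ≤ q) (hq : ∀ i, q ≤ rowSum (M ^ t) i) (k : ℕ) :
    ∀ i, q ^ k ≤ rowSum (M ^ (t * k)) i := by
  induction k with
  | zero => intro i; rw [mul_zero, pow_zero, pow_zero]; unfold rowSum; simp [one_apply]
  | succ k ih =>
    intro i
    have : M ^ (t * (k + 1)) = M ^ t * M ^ (t * k) := by
      rw [← pow_add]; ring_nf
    rw [this, rowSum_mul, pow_succ']
    calc q * q ^ k ≤ rowSum (M ^ t) i * q ^ k :=
          mul_le_mul_of_nonneg_right (hq i) (pow_nonneg hq0 k)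
      _ = ∑ l, (M ^ t) i l * q ^ k := by rw [← Finset.sum_mul]; rfl
      _ ≤ ∑ l, (M ^ t) i l * rowSum (M ^ (t * k)) l :=
          Finset.sum_le_sum fun l _ => mul_le_mul_of_nonneg_left (ih l) (pow_entry_nonneg hM t i l)

end RowSum
section SpecFacts2
variable {n : ℕ} {M : Matrix (Fin n) (Fin n) ℝ}


lemma abs_map_entry (hM : ∀ i j, 0 ≤ M i j) (i j : Fin n) :
    ‖(M.map Complex.ofReal) i j‖ = M i j := by
  simp [Matrix.map_apply, Complex.norm_real, abs_of_nonneg (hM i j)]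

lemma abs_rowSum (hM : ∀ i j, 0 ≤ M i j) (k : ℕ) (i : Fin n) :
    ∑ j, ‖((M.map Complex.ofReal) ^ k) i j‖ = rowSum (M ^ k) i := by
  rw [← map_ofReal_pow]
  unfold rowSum
  refine Finset.sum_congr rfl fun j _ => ?_
  simp [Matrix.map_apply, Complex.norm_real, abs_of_nonneg (pow_entry_nonneg hM k i j)]

lemma specRad_set_nonempty (hn : 0 < n) :
    {r : ℝ | ∃ μ : ℂ, (M.map Complex.ofReal).charpoly.IsRoot μ ∧ r = ‖μ‖}.Nonempty := by
  obtain ⟨μ, hμ⟩ := exists_root M hn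
  exact ⟨‖μ‖, μ, hμ, rfl⟩

lemma specRad_set_bddAbove (hM : ∀ i j, 0 ≤ M i j) :
    BddAbove {r : ℝ | ∃ μ : ℂ, (M.map Complex.ofReal).charpoly.IsRoot μ ∧ r = ‖μ‖} := by
  classical
  by_cases hn : n = 0
  · subst hn
    refine ⟨1, fun r hr => ?_⟩
    obtain ⟨μ, hμ, rfl⟩ := hr
    exfalso
    have : (M.map Complex.ofReal).charpoly = 1 := by
      have h1 : (M.map Complex.ofReal).charpoly.natDegree = 0 := by
        rw [Matrix.charpoly_natDegree_eq_dim, Fintype.card_fin]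
      exact (Matrix.charpoly_monic _).natDegree_eq_zero.mp h1
    rw [this] at hμ
    simpa using hμ
  · refine ⟨∑ i, rowSum M i, fun r hr => ?_⟩
    obtain ⟨μ, hμ, rfl⟩ := hr
    refine abs_root_le _ μ ((isRoot_charpoly_iff_eig _ μ).mp hμ) _ fun i => ?_
    have h1 : ∑ j, ‖(M.map Complex.ofReal) i j‖ = rowSum M i := by
      have := abs_rowSum hM 1 i
      simpa [pow_one] using this
    rw [h1]
    refine Finset.single_le_sum (f := fun i => rowSum M i) (fun i _ => ?_) (Finset.mem_univ i)
    exact Finset.sum_nonneg fun j _ => hM i j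

lemma le_specRad (hM : ∀ i j, 0 ≤ M i j) {μ : ℂ}
    (hμ : (M.map Complex.ofReal).charpoly.IsRoot μ) : ‖μ‖ ≤ specRad M :=
  le_csSup (specRad_set_bddAbove hM) ⟨μ, hμ, rfl⟩

lemma specRad_nonneg (hM : ∀ i j, 0 ≤ M i j) (hn : 0 < n) : 0 ≤ specRad M := by
  obtain ⟨μ, hμ⟩ := exists_root M hn
  exact le_trans (norm_nonneg μ) (le_specRad hM hμ)

lemma specRad_le (hn : 0 < n) {B : ℝ}
    (hB : ∀ μ : ℂ, (M.map Complex.ofReal).charpoly.IsRoot μ → ‖μ‖ ≤ B) :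
    specRad M ≤ B := by
  refine csSup_le (specRad_set_nonempty hn) ?_
  rintro r ⟨μ, hμ, rfl⟩
  exact hB μ hμ

/-- trace bound: `trace (M^m) ≤ n * ρ^m` -/
lemma trace_pow_le (hM : ∀ i j, 0 ≤ M i j) (hn : 0 < n) {m : ℕ} (hm : m ≠ 0) :
    Matrix.trace (M ^ m) ≤ (n : ℝ) * (specRad M) ^ m := by
  set Ac := M.map Complex.ofReal with hAc
  have htr : ((Matrix.trace (M ^ m) : ℝ) : ℂ) = Matrix.trace (Ac ^ m) := by
    rw [← map_ofReal_pow]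
    simp [Matrix.trace, Matrix.map_apply, Matrix.diag]
  have h1 : Matrix.trace (Ac ^ m) = (Ac ^ m).charpoly.roots.sum :=
    Matrix.trace_eq_sum_roots_charpoly _
  have h2 : ∀ ν ∈ (Ac ^ m).charpoly.roots, ‖ν‖ ≤ (specRad M) ^ m := by
    intro ν hν
    have hroot : (Ac ^ m).charpoly.IsRoot ν := isRoot_of_mem_roots hν
    obtain ⟨μ, hμ, rfl⟩ := root_pow_inv Ac hm ν hroot
    rw [norm_pow]
    exact pow_le_pow_left₀ (norm_nonneg μ) (le_specRad hM hμ) m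
  calc Matrix.trace (M ^ m) ≤ ‖((Matrix.trace (M ^ m) : ℝ) : ℂ)‖ := by
        rw [Complex.norm_real, Real.norm_eq_abs]; exact le_abs_self _
    _ = ‖(Ac ^ m).charpoly.roots.sum‖ := by rw [htr, h1]
    _ ≤ ((Ac ^ m).charpoly.roots.map (fun ν => ‖ν‖)).sum := by
        have := norm_multiset_sum_le ((Ac ^ m).charpoly.roots)
        simpa using this
    _ ≤ ((Ac ^ m).charpoly.roots.map (fun _ => (specRad M) ^ m)).sum :=
        Multiset.sum_map_le_sum_map _ _ h2
    _ = (Multiset.card ((Ac ^ m).charpoly.roots) : ℝ) * (specRad M) ^ m := by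
        rw [Multiset.map_const', Multiset.sum_replicate, nsmul_eq_mul]
    _ ≤ (n : ℝ) * (specRad M) ^ m := by
        refine mul_le_mul_of_nonneg_right ?_ (pow_nonneg (specRad_nonneg hM hn) m)
        have hc := Polynomial.card_roots' (Ac ^ m).charpoly
        rw [Matrix.charpoly_natDegree_eq_dim, Fintype.card_fin] at hc
        exact_mod_cast hc

end SpecFacts2

section Irr
variable {n : ℕ} {M : Matrix (Fin n) (Fin n) ℝ}


lemma irred_pow_pos (hM : ∀ i j, 0 ≤ M i j) (hirr : Irred M) (i j : Fin n) :
    ∃ k : ℕ, 0 < (M ^ k) i j := by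
  have h := hirr i j
  induction h with
  | refl => exact ⟨0, by simp [Matrix.one_apply]⟩
  | @tail b c hab hbc ih =>
    obtain ⟨k, hk⟩ := ih
    refine ⟨k + 1, ?_⟩
    rw [pow_succ, Matrix.mul_apply]
    have hbc' : 0 < M b c := lt_of_le_of_ne (hM b c) (Ne.symm hbc)
    calc (0:ℝ) < (M ^ k) i b * M b c := mul_pos hk hbc'
      _ ≤ ∑ l, (M ^ k) i l * M l c := by
          refine Finset.single_le_sum (f := fun l => (M ^ k) i l * M l c)
            (fun l _ => mul_nonneg (pow_entry_nonneg hM k i l) (hM l c)) (Finset.mem_univ b)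

lemma trace_pow_ge_entry (hM : ∀ i j, 0 ≤ M i j) (i j : Fin n) (a b : ℕ) :
    (M ^ a) i j * (M ^ b) j i ≤ Matrix.trace (M ^ (a + b)) := by
  have h1 : (M ^ a) i j * (M ^ b) j i ≤ (M ^ (a + b)) i i := by
    rw [pow_add, Matrix.mul_apply]
    refine Finset.single_le_sum (f := fun l => (M ^ a) i l * (M ^ b) l i)
      (fun l _ => mul_nonneg (pow_entry_nonneg hM a i l) (pow_entry_nonneg hM b l i))
      (Finset.mem_univ j)
  refine le_trans h1 ?_
  unfold Matrix.trace
  exact Finset.single_le_sum (f := fun l => (M ^ (a + b)) l l)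
    (fun l _ => pow_entry_nonneg hM (a + b) l l) (Finset.mem_univ i)

lemma pow_le_of_forall_pow_le {a b C : ℝ} (ha : 0 ≤ a) (hb : 0 < b) (hC : 0 < C)
    (h : ∀ k : ℕ, 1 ≤ k → a ^ k ≤ C * b ^ k) : a ≤ b := by
  by_contra hab
  push_neg at hab
  have ha' : 0 < a := lt_trans hb hab
  have h1 : (1:ℝ) < a / b := (one_lt_div hb).mpr hab
  obtain ⟨k, hk⟩ := pow_unbounded_of_one_lt C h1
  have hk1 : 1 ≤ k + 1 := Nat.le_add_left 1 k
  have h2 := h (k+1) hk1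
  have h3 : (a / b) ^ (k+1) ≤ C := by
    rw [div_pow, div_le_iff₀ (pow_pos hb _)]
    exact h2.trans (by ring_nf; exact le_refl _)
  have h4 : C < (a/b)^(k+1) :=
    lt_of_lt_of_le hk (pow_le_pow_right₀ h1.le (Nat.le_add_right k 1))
  exact absurd h3 (not_le.mpr h4)

end Irr

section PowLower
variable {n : ℕ} {M : Matrix (Fin n) (Fin n) ℝ}

lemma specRad_pow_ge (hM : ∀ i j, 0 ≤ M i j) (hirr : Irred M) (hn : 0 < n)
    {t : ℕ} (ht : t ≠ 0) {q : ℝ} (hq1 : 1 ≤ q) (hq : ∀ i, q ≤ rowSum (M ^ t) i) :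
    q ≤ (specRad M) ^ t := by
  classical
  have hq0 : (0:ℝ) ≤ q := le_trans zero_le_one hq1
  set i0 : Fin n := ⟨0, hn⟩ with hi0
  choose kj hkj using fun j => irred_pow_pos hM hirr j i0
  set L : ℕ := Finset.univ.sup kj with hL
  have huniv : (Finset.univ : Finset (Fin n)).Nonempty := ⟨i0, Finset.mem_univ _⟩
  set c : ℝ := Finset.univ.inf' huniv (fun j => (M ^ kj j) j i0) with hc
  have hcpos : 0 < c := by
    rw [hc, Finset.lt_inf'_iff]
    exact fun j _ => hkj j
  have hρ0 : 0 ≤ specRad M := specRad_nonneg hM hn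
  set ρ := specRad M with hρ
  have key : ∀ k : ℕ, 1 ≤ k → ∃ m : ℕ, t * k ≤ m ∧ m ≤ t * k + L ∧
      (c / n) * q ^ k ≤ Matrix.trace (M ^ m) := by
    intro k hk
    have h1 : q ^ k ≤ rowSum (M ^ (t * k)) i0 := rowSum_pow_mul_ge hM hq0 hq k i0
    have h2 : ∃ j, q ^ k / n ≤ (M ^ (t * k)) i0 j := by
      by_contra hcon
      push_neg at hcon
      have : rowSum (M ^ (t * k)) i0 < ∑ _j : Fin n, q ^ k / n :=
        Finset.sum_lt_sum_of_nonempty huniv fun j _ => hcon j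
      rw [Finset.sum_const, Finset.card_univ, Fintype.card_fin, nsmul_eq_mul] at this
      rw [mul_div_cancel₀] at this
      · exact absurd h1 (not_le.mpr this)
      · positivity
    obtain ⟨j, hj⟩ := h2
    refine ⟨t * k + kj j, Nat.le_add_right _ _, by
      have : kj j ≤ L := Finset.le_sup (Finset.mem_univ j)
      omega, ?_⟩
    calc (c / n) * q ^ k = (q ^ k / n) * c := by ring
      _ ≤ (M ^ (t * k)) i0 j * (M ^ kj j) j i0 := by
          refine mul_le_mul hj ?_ hcpos.le (pow_entry_nonneg hM _ _ _)
          exact Finset.inf'_le _ (Finset.mem_univ j)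
      _ ≤ Matrix.trace (M ^ (t * k + kj j)) := trace_pow_ge_entry hM i0 j _ _
  by_cases hρ1 : ρ < 1
  · exfalso
    have hcn : 0 < c / n / n := by positivity
    obtain ⟨k0, hk0⟩ := exists_pow_lt_of_lt_one hcn hρ1
    set k := max k0 1 with hk
    obtain ⟨m, hm1, hm2, hm3⟩ := key k (le_max_right _ _)
    have hmpos : m ≠ 0 := by
      have : 1 ≤ t * k := Nat.one_le_iff_ne_zero.mpr (by positivity)
      omega
    have h4 : Matrix.trace (M ^ m) ≤ (n : ℝ) * ρ ^ m := trace_pow_le hM hn hmpos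
    have h5 : ρ ^ m ≤ ρ ^ k0 := by
      refine pow_le_pow_of_le_one hρ0 hρ1.le ?_
      calc k0 ≤ k := le_max_left _ _
        _ ≤ t * k := Nat.le_mul_of_pos_left k (Nat.pos_of_ne_zero ht)
        _ ≤ m := hm1
    have h6 : c / n ≤ Matrix.trace (M ^ m) := by
      calc c / n = (c / n) * 1 := by ring
        _ ≤ (c / n) * q ^ k := by
            refine mul_le_mul_of_nonneg_left (one_le_pow₀ hq1) (by positivity)
        _ ≤ _ := hm3
    have : (n:ℝ) * ρ ^ m < c / n := by
      calc (n:ℝ) * ρ ^ m ≤ (n:ℝ) * ρ ^ k0 := by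
            exact mul_le_mul_of_nonneg_left h5 (by positivity)
        _ < (n:ℝ) * (c / n / n) := by
            refine mul_lt_mul_of_pos_left hk0 (by exact_mod_cast hn)
        _ = c / n := by field_simp
    linarith
  · push_neg at hρ1
    have hρt : (0:ℝ) < ρ ^ t := pow_pos (lt_of_lt_of_le zero_lt_one hρ1) t
    have hC : (0:ℝ) < (n:ℝ) * n * ρ ^ L / c := by positivity
    refine pow_le_of_forall_pow_le hq0 hρt hC ?_
    intro k hk
    obtain ⟨m, hm1, hm2, hm3⟩ := key k hk
    have hmpos : m ≠ 0 := by
      have : 1 ≤ t * k := Nat.one_le_iff_ne_zero.mpr (by positivity)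
      omega
    have h4 : Matrix.trace (M ^ m) ≤ (n : ℝ) * ρ ^ m := trace_pow_le hM hn hmpos
    have h5 : ρ ^ m ≤ ρ ^ (t * k + L) := pow_le_pow_right₀ hρ1 hm2
    have : (c / n) * q ^ k ≤ (n:ℝ) * ρ ^ (t * k + L) := by
      calc (c / n) * q ^ k ≤ (n:ℝ) * ρ ^ m := le_trans hm3 h4
        _ ≤ (n:ℝ) * ρ ^ (t * k + L) := mul_le_mul_of_nonneg_left h5 (by positivity)
    have hexp : ρ ^ (t * k + L) = ρ ^ L * (ρ ^ t) ^ k := by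
      rw [pow_add, ← pow_mul]
      ring
    rw [hexp] at this
    have hnpos : (0:ℝ) < n := by exact_mod_cast hn
    rw [div_mul_eq_mul_div, div_le_iff₀ hnpos] at this
    calc q ^ k ≤ ((n:ℝ) * (ρ ^ L * (ρ ^ t) ^ k) * n) / c := by
          rw [le_div_iff₀ hcpos]; linarith
      _ = ((n:ℝ) * n * ρ ^ L / c) * (ρ ^ t) ^ k := by ring
end PowLower

section Strict
variable {n : ℕ} {M : Matrix (Fin n) (Fin n) ℝ}

lemma rowSum_pow_mul_le (hM : ∀ i j, 0 ≤ M i j)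
    {t : ℕ} {q : ℝ} (hq0 : 0 ≤ q) (hq : ∀ i, rowSum (M ^ t) i ≤ q) (k : ℕ) :
    ∀ i, rowSum (M ^ (t * k)) i ≤ q ^ k := by
  induction k with
  | zero => intro i; rw [mul_zero, pow_zero, pow_zero]; unfold rowSum; simp [Matrix.one_apply]
  | succ k ih =>
    intro i
    have hMt : M ^ (t * (k + 1)) = M ^ t * M ^ (t * k) := by rw [← pow_add]; ring_nf
    rw [hMt, rowSum_mul, pow_succ']
    calc ∑ l, (M ^ t) i l * rowSum (M ^ (t * k)) l ≤ ∑ l, (M ^ t) i l * q ^ k :=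
          Finset.sum_le_sum fun l _ =>
            mul_le_mul_of_nonneg_left (ih l) (pow_entry_nonneg hM t i l)
      _ = rowSum (M ^ t) i * q ^ k := by rw [← Finset.sum_mul]; rfl
      _ ≤ q * q ^ k := mul_le_mul_of_nonneg_right (hq i) (pow_nonneg hq0 k)

/-- If all rows ≥ 1, rows ≤ S, one row strictly < S, and M irreducible,
then for N large all row sums of M^N are < S^N. -/
lemma exists_pow_rowSum_lt (hM : ∀ i j, 0 ≤ M i j) (hirr : Irred M) (hn : 0 < n)
    (h1 : ∀ i, 1 ≤ rowSum M i) {S : ℝ} (hS : ∀ i, rowSum M i ≤ S)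
    {k : Fin n} (hk : rowSum M k < S) :
    ∃ N : ℕ, N ≠ 0 ∧ ∀ i, rowSum (M ^ N) i < S ^ N := by
  classical
  have hS1 : (1:ℝ) ≤ S := le_trans (h1 ⟨0, hn⟩) (hS _)
  have hS0 : (0:ℝ) < S := lt_of_lt_of_le zero_lt_one hS1
  choose ℓ hℓ using fun j => irred_pow_pos hM hirr j k
  set N : ℕ := (Finset.univ.sup ℓ) + 1 with hN
  refine ⟨N, Nat.succ_ne_zero _, fun i => ?_⟩
  set d : ℕ := N - ℓ i with hd
  have hdpos : 1 ≤ d := by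
    have : ℓ i ≤ Finset.univ.sup ℓ := Finset.le_sup (Finset.mem_univ i)
    omega
  have hsplit : M ^ N = M ^ (ℓ i) * M ^ d := by
    rw [← pow_add]
    congr 1
    have : ℓ i ≤ Finset.univ.sup ℓ := Finset.le_sup (Finset.mem_univ i)
    omega
  have hrowk : rowSum (M ^ d) k < S ^ d := by
    have hd2 : M ^ d = M * M ^ (d - 1) := by
      rw [← pow_succ']
      congr 1
      omega
    rw [hd2, rowSum_mul]
    calc ∑ l, M k l * rowSum (M ^ (d-1)) l ≤ ∑ l, M k l * S ^ (d-1) :=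
          Finset.sum_le_sum fun l _ =>
            mul_le_mul_of_nonneg_left (rowSum_pow_le hM hS0.le hS (d-1) l) (hM k l)
      _ = rowSum M k * S ^ (d-1) := by rw [← Finset.sum_mul]; rfl
      _ < S * S ^ (d-1) := by
          exact mul_lt_mul_of_pos_right hk (pow_pos hS0 _)
      _ = S ^ d := by rw [← pow_succ']; congr 1; omega
  have hlt : rowSum (M ^ N) i < S ^ N := by
    rw [hsplit, rowSum_mul]
    calc ∑ j, (M ^ ℓ i) i j * rowSum (M ^ d) j < ∑ j, (M ^ ℓ i) i j * S ^ d := by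
          refine Finset.sum_lt_sum (fun j _ => mul_le_mul_of_nonneg_left
            (rowSum_pow_le hM hS0.le hS d j) (pow_entry_nonneg hM _ i j)) ?_
          exact ⟨k, Finset.mem_univ k, mul_lt_mul_of_pos_left hrowk (hℓ i)⟩
      _ = rowSum (M ^ ℓ i) i * S ^ d := by rw [← Finset.sum_mul]; rfl
      _ ≤ S ^ ℓ i * S ^ d := mul_le_mul_of_nonneg_right
          (rowSum_pow_le hM hS0.le hS _ i) (pow_pos hS0 _).le
      _ = S ^ N := by
          rw [← pow_add]
          congr 1
          have : ℓ i ≤ Finset.univ.sup ℓ := Finset.le_sup (Finset.mem_univ i)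
          omega
  exact hlt

lemma exists_pow_rowSum_gt (hM : ∀ i j, 0 ≤ M i j) (hirr : Irred M) (hn : 0 < n)
    {s : ℝ} (hs1 : 1 ≤ s) (hs : ∀ i, s ≤ rowSum M i)
    {k : Fin n} (hk : s < rowSum M k) :
    ∃ N : ℕ, N ≠ 0 ∧ ∀ i, s ^ N < rowSum (M ^ N) i := by
  classical
  have hs0 : (0:ℝ) < s := lt_of_lt_of_le zero_lt_one hs1
  choose ℓ hℓ using fun j => irred_pow_pos hM hirr j k
  set N : ℕ := (Finset.univ.sup ℓ) + 1 with hN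
  refine ⟨N, Nat.succ_ne_zero _, fun i => ?_⟩
  set d : ℕ := N - ℓ i with hd
  have hdpos : 1 ≤ d := by
    have : ℓ i ≤ Finset.univ.sup ℓ := Finset.le_sup (Finset.mem_univ i)
    omega
  have hsplit : M ^ N = M ^ (ℓ i) * M ^ d := by
    rw [← pow_add]
    congr 1
    have : ℓ i ≤ Finset.univ.sup ℓ := Finset.le_sup (Finset.mem_univ i)
    omega
  have hrowk : s ^ d < rowSum (M ^ d) k := by
    have hd2 : M ^ d = M * M ^ (d - 1) := by
      rw [← pow_succ']; congr 1; omega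
    rw [hd2, rowSum_mul]
    calc s ^ d = s * s ^ (d-1) := by rw [← pow_succ']; congr 1; omega
      _ < rowSum M k * s ^ (d-1) := mul_lt_mul_of_pos_right hk (pow_pos hs0 _)
      _ = ∑ l, M k l * s ^ (d-1) := by rw [← Finset.sum_mul]; rfl
      _ ≤ ∑ l, M k l * rowSum (M ^ (d-1)) l :=
          Finset.sum_le_sum fun l _ =>
            mul_le_mul_of_nonneg_left (rowSum_pow_ge hM hs0.le hs (d-1) l) (hM k l)
  rw [hsplit, rowSum_mul]
  calc s ^ N = s ^ ℓ i * s ^ d := by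
        rw [← pow_add]
        congr 1
        have : ℓ i ≤ Finset.univ.sup ℓ := Finset.le_sup (Finset.mem_univ i)
        omega
    _ ≤ rowSum (M ^ ℓ i) i * s ^ d := mul_le_mul_of_nonneg_right
        (rowSum_pow_ge hM hs0.le hs _ i) (pow_pos hs0 _).le
    _ = ∑ j, (M ^ ℓ i) i j * s ^ d := by rw [← Finset.sum_mul]; rfl
    _ < ∑ j, (M ^ ℓ i) i j * rowSum (M ^ d) j := by
        refine Finset.sum_lt_sum (fun j _ => mul_le_mul_of_nonneg_left
          (rowSum_pow_ge hM hs0.le hs d j) (pow_entry_nonneg hM _ i j)) ?_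
        exact ⟨k, Finset.mem_univ k, mul_lt_mul_of_pos_left hrowk (hℓ i)⟩
end Strict

section StrictConc
variable {n : ℕ} {M : Matrix (Fin n) (Fin n) ℝ}

lemma specRad_le_max (hM : ∀ i j, 0 ≤ M i j) (hn : 0 < n) {S : ℝ}
    (hS : ∀ i, rowSum M i ≤ S) : specRad M ≤ S := by
  refine specRad_le hn fun μ hμ => ?_
  refine abs_root_le _ μ ((isRoot_charpoly_iff_eig _ μ).mp hμ) _ fun i => ?_
  have h2 := abs_rowSum hM 1 i
  rw [pow_one, pow_one] at h2
  rw [h2]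
  exact hS i

lemma specRad_ge_min (hM : ∀ i j, 0 ≤ M i j) (hirr : Irred M) (hn : 0 < n) {s : ℝ}
    (hs1 : 1 ≤ s) (hs : ∀ i, s ≤ rowSum M i) : s ≤ specRad M := by
  have h := specRad_pow_ge hM hirr hn (t := 1) one_ne_zero hs1
    (by intro i; rw [pow_one]; exact hs i)
  rwa [pow_one] at h

lemma specRad_lt_max (hM : ∀ i j, 0 ≤ M i j) (hirr : Irred M) (hn : 0 < n)
    (h1 : ∀ i, 1 ≤ rowSum M i) {S : ℝ} (hS : ∀ i, rowSum M i ≤ S)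
    {k : Fin n} (hk : rowSum M k < S) : specRad M < S := by
  classical
  have hS1 : (1:ℝ) ≤ S := le_trans (h1 ⟨0, hn⟩) (hS _)
  have hS0 : (0:ℝ) < S := lt_of_lt_of_le zero_lt_one hS1
  obtain ⟨N, hN0, hNlt⟩ := exists_pow_rowSum_lt hM hirr hn h1 hS hk
  have huniv : (Finset.univ : Finset (Fin n)).Nonempty := ⟨⟨0, hn⟩, Finset.mem_univ _⟩
  set T : ℝ := Finset.univ.sup' huniv (fun i => rowSum (M ^ N) i) with hT
  have hTle : ∀ i, rowSum (M ^ N) i ≤ T := fun i => Finset.le_sup' _ (Finset.mem_univ i)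
  have hT1 : (1:ℝ) ≤ T := by
    refine le_trans ?_ (hTle ⟨0, hn⟩)
    have := rowSum_pow_ge hM zero_le_one h1 N ⟨0, hn⟩
    simpa using this
  have hT0 : (0:ℝ) < T := lt_of_lt_of_le zero_lt_one hT1
  have hTS : T < S ^ N := by
    rw [hT, Finset.sup'_lt_iff]
    exact fun i _ => hNlt i
  set x : ℝ := T ^ ((N:ℝ)⁻¹) with hx
  have hNne : ((N:ℝ)) ≠ 0 := Nat.cast_ne_zero.mpr hN0
  have hx0 : 0 ≤ x := Real.rpow_nonneg hT0.le _
  have hxN : x ^ N = T := by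
    rw [hx, ← Real.rpow_natCast (T ^ ((N:ℝ)⁻¹)) N, ← Real.rpow_mul hT0.le,
      inv_mul_cancel₀ hNne, Real.rpow_one]
  have hroot : ∀ μ : ℂ, (M.map Complex.ofReal).charpoly.IsRoot μ → ‖μ‖ ≤ x := by
    intro μ hμ
    have habs : ‖μ‖ ^ N ≤ T := by
      refine pow_le_of_forall_pow_le (pow_nonneg (norm_nonneg μ) N) hT0 one_pos ?_
      intro k hk1
      have hroot2 : ((M ^ (N * k)).map Complex.ofReal).charpoly.IsRoot (μ ^ (N * k)) := by
        have := root_pow _ μ hμ (N * k)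
        rwa [← map_ofReal_pow] at this
      have hb := abs_root_le _ _ ((isRoot_charpoly_iff_eig _ _).mp hroot2) (T ^ k)
        (fun i => by
          rw [map_ofReal_pow, abs_rowSum hM (N * k) i]
          exact rowSum_pow_mul_le hM hT0.le hTle k i)
      rw [norm_pow, pow_mul] at hb
      rw [one_mul]
      exact hb
    rw [← hxN] at habs
    exact le_of_pow_le_pow_left₀ hN0 hx0 habs
  refine lt_of_le_of_lt (specRad_le hn hroot) ?_
  by_contra hc
  push_neg at hc
  have : S ^ N ≤ x ^ N := pow_le_pow_left₀ hS0.le hc N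
  rw [hxN] at this
  exact absurd hTS (not_lt.mpr this)

lemma specRad_gt_min (hM : ∀ i j, 0 ≤ M i j) (hirr : Irred M) (hn : 0 < n)
    {s : ℝ} (hs1 : 1 ≤ s) (hs : ∀ i, s ≤ rowSum M i)
    {k : Fin n} (hk : s < rowSum M k) : s < specRad M := by
  classical
  have hs0 : (0:ℝ) < s := lt_of_lt_of_le zero_lt_one hs1
  obtain ⟨N, hN0, hNgt⟩ := exists_pow_rowSum_gt hM hirr hn hs1 hs hk
  have huniv : (Finset.univ : Finset (Fin n)).Nonempty := ⟨⟨0, hn⟩, Finset.mem_univ _⟩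
  set q : ℝ := Finset.univ.inf' huniv (fun i => rowSum (M ^ N) i) with hqdef
  have hsq : s ^ N < q := by
    rw [hqdef, Finset.lt_inf'_iff]
    exact fun i _ => hNgt i
  have hq1 : (1:ℝ) ≤ q := le_trans (one_le_pow₀ hs1) hsq.le
  have hqle : q ≤ (specRad M) ^ N :=
    specRad_pow_ge hM hirr hn hN0 hq1 (fun i => Finset.inf'_le _ (Finset.mem_univ i))
  by_contra hc
  push_neg at hc
  have : (specRad M) ^ N ≤ s ^ N := pow_le_pow_left₀ (specRad_nonneg hM hn) hc N
  linarith
end StrictConc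

section Graph
variable {n : ℕ} {G : Fin n → Fin n → Prop}

lemma exists_ne_of_two_le (hn : 2 ≤ n) (i : Fin n) : ∃ j : Fin n, j ≠ i := by
  by_cases h : i = ⟨0, by omega⟩
  · exact ⟨⟨1, by omega⟩, by subst h; intro hc; exact absurd (congrArg Fin.val hc) (by simp)⟩
  · exact ⟨⟨0, by omega⟩, fun hc => h (hc ▸ rfl)⟩

lemma outdeg_pos (hn : 2 ≤ n) (hSC : SConn G) (i : Fin n) :
    1 ≤ outdeg G i := by
  obtain ⟨j, hj⟩ := exists_ne_of_two_le hn i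
  rcases (hSC i j).cases_head with h | ⟨c, hic, -⟩
  · exact absurd h.symm hj
  · rw [outdeg]
    refine Finset.card_pos.mpr ⟨c, Finset.mem_filter.mpr ⟨Finset.mem_univ c, hic⟩⟩

lemma indeg_exists (hn : 2 ≤ n) (hSC : SConn G) (v : Fin n) : ∃ c, G c v := by
  obtain ⟨u, hu⟩ := exists_ne_of_two_le hn v
  rcases (hSC u v).cases_tail with h | ⟨c, -, hcv⟩
  · exact absurd h.symm hu
  · exact ⟨c, hcv⟩

lemma outdeg_le (hGs : ∀ i, ¬ G i i) (i : Fin n) : outdeg G i ≤ n - 1 := by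
  have hsub : Finset.univ.filter (fun j => G i j) ⊆ Finset.univ.erase i := by
    intro j hj
    rw [Finset.mem_filter] at hj
    refine Finset.mem_erase.mpr ⟨?_, Finset.mem_univ j⟩
    intro hc; subst hc; exact hGs j hj.2
  calc outdeg G i ≤ (Finset.univ.erase i).card := Finset.card_le_card hsub
    _ = n - 1 := by rw [Finset.card_erase_of_mem (Finset.mem_univ i), Finset.card_univ,
        Fintype.card_fin]

lemma outdeg_lt (hGs : ∀ i, ¬ G i i) {u v : Fin n} (huv : u ≠ v) (hnG : ¬ G u v) :
    outdeg G u ≤ n - 2 := by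
  have hsub : Finset.univ.filter (fun j => G u j) ⊆ (Finset.univ.erase u).erase v := by
    intro j hj
    rw [Finset.mem_filter] at hj
    refine Finset.mem_erase.mpr ⟨?_, Finset.mem_erase.mpr ⟨?_, Finset.mem_univ j⟩⟩
    · intro hc; subst hc; exact hnG hj.2
    · intro hc; subst hc; exact hGs j hj.2
  calc outdeg G u ≤ ((Finset.univ.erase u).erase v).card := Finset.card_le_card hsub
    _ ≤ n - 2 := by
        rw [Finset.card_erase_of_mem (Finset.mem_erase.mpr ⟨huv.symm, Finset.mem_univ v⟩),
          Finset.card_erase_of_mem (Finset.mem_univ u), Finset.card_univ, Fintype.card_fin]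
        omega

lemma outdeg_eq_of_complete (hGs : ∀ i, ¬ G i i) (hcomp : ∀ u v, G u v ↔ u ≠ v) (i : Fin n) :
    outdeg G i = n - 1 := by
  have : Finset.univ.filter (fun j => G i j) = Finset.univ.erase i := by
    ext j
    rw [Finset.mem_filter, Finset.mem_erase, hcomp]
    constructor
    · rintro ⟨-, h⟩; exact ⟨fun hc => h (hc ▸ rfl), Finset.mem_univ j⟩
    · rintro ⟨h, -⟩; exact ⟨Finset.mem_univ j, fun hc => h (hc ▸ rfl)⟩
  rw [outdeg, this, Finset.card_erase_of_mem (Finset.mem_univ i), Finset.card_univ,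
    Fintype.card_fin]

lemma complete_of_outdeg (hGs : ∀ i, ¬ G i i) (hdeg : ∀ i, outdeg G i = n - 1) (hn : 1 ≤ n) :
    ∀ u v, G u v ↔ u ≠ v := by
  intro u v
  have hsub : Finset.univ.filter (fun j => G u j) ⊆ Finset.univ.erase u := by
    intro j hj
    rw [Finset.mem_filter] at hj
    exact Finset.mem_erase.mpr ⟨fun hc => hGs j (hc ▸ hj.2), Finset.mem_univ j⟩
  have hcard : (Finset.univ.erase u).card ≤ (Finset.univ.filter (fun j => G u j)).card := by
    rw [Finset.card_erase_of_mem (Finset.mem_univ u), Finset.card_univ, Fintype.card_fin]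
    exact le_of_eq (hdeg u).symm
  have heq := Finset.eq_of_subset_of_card_le hsub hcard
  constructor
  · intro h hc
    subst hc
    exact hGs u h
  · intro h
    have : v ∈ Finset.univ.filter (fun j => G u j) := by
      rw [heq]
      exact Finset.mem_erase.mpr ⟨fun hc => h (hc ▸ rfl), Finset.mem_univ v⟩
    exact (Finset.mem_filter.mp this).2

lemma outdeg_eq_one_of_diso (hn : 1 ≤ n) (h : DIso G (dirCycle n)) (i : Fin n) :
    outdeg G i = 1 := by
  obtain ⟨e, he⟩ := h
  set t : Fin n := ⟨(↑(e i) + 1) % n, Nat.mod_lt _ (by omega)⟩ with ht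
  have : Finset.univ.filter (fun j => G i j) = {e.symm t} := by
    ext j
    rw [Finset.mem_filter, Finset.mem_singleton, he]
    constructor
    · rintro ⟨-, h2⟩
      have : e j = t := Fin.ext h2
      rw [← this, Equiv.symm_apply_apply]
    · intro h2
      subst h2
      refine ⟨Finset.mem_univ _, ?_⟩
      show (↑(e (e.symm t)) : ℕ) = (↑(e i) + 1) % n
      rw [Equiv.apply_symm_apply]
  rw [outdeg, this, Finset.card_singleton]

end Graph

section Cycle
variable {n : ℕ} {G : Fin n → Fin n → Prop}

lemma diso_cycle (hn : 2 ≤ n) (hGs : ∀ i, ¬ G i i) (hSC : SConn G)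
    (hdeg : ∀ i, outdeg G i = 1) : DIso G (dirCycle n) := by
  have hex : ∀ i : Fin n, ∃ a, Finset.univ.filter (fun j => G i j) = {a} :=
    fun i => Finset.card_eq_one.mp (hdeg i)
  choose f hf using hex
  have hGf : ∀ i j, G i j ↔ j = f i := by
    intro i j
    constructor
    · intro h
      have h2 : j ∈ Finset.univ.filter (fun j => G i j) :=
        Finset.mem_filter.mpr ⟨Finset.mem_univ _, h⟩
      rw [hf i, Finset.mem_singleton] at h2; exact h2
    · intro h; subst h
      have h2 : f i ∈ Finset.univ.filter (fun j => G i j) := by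
        rw [hf i]; exact Finset.mem_singleton_self _
      exact (Finset.mem_filter.mp h2).2
  have hsurj : Function.Surjective f := fun v =>
    (indeg_exists hn hSC v).imp fun c hc => ((hGf c v).mp hc).symm
  have hinj : Function.Injective f := Finite.injective_iff_surjective.mpr hsurj
  set i0 : Fin n := ⟨0, by omega⟩ with hi0
  have hreach : ∀ v, ∃ k, f^[k] i0 = v := by
    intro v
    have h := hSC i0 v
    induction h with
    | refl => exact ⟨0, rfl⟩
    | @tail b c hb hbc ih =>
      obtain ⟨k, hk⟩ := ih
      refine ⟨k+1, ?_⟩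
      rw [Function.iterate_succ_apply', hk, ← ((hGf b c).mp hbc)]
  have hperiod : ∀ p, 0 < p → f^[p] i0 = i0 → n ≤ p := by
    intro p hp hfp
    have hmod : ∀ m, f^[m] i0 = f^[m % p] i0 := by
      intro m
      induction m using Nat.strong_induction_on with
      | _ m ih =>
        by_cases h : m < p
        · rw [Nat.mod_eq_of_lt h]
        · push_neg at h
          have h2 : m = (m - p) + p := by omega
          have h3 : m % p = (m - p) % p := by
            conv_lhs => rw [h2]
            rw [Nat.add_mod_right]
          have key : f^[m] i0 = f^[m - p] i0 := by
            conv_lhs => rw [h2]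
            rw [Function.iterate_add_apply, hfp]
          rw [key, ih (m - p) (by omega), ← h3]
    have hsub : (Finset.univ : Finset (Fin n)) ⊆
        (Finset.range p).image (fun m => f^[m] i0) := by
      intro v _
      obtain ⟨k, hk⟩ := hreach v
      refine Finset.mem_image.mpr ⟨k % p, Finset.mem_range.mpr (Nat.mod_lt _ hp), ?_⟩
      rw [← hmod k, hk]
    calc n = (Finset.univ : Finset (Fin n)).card := by
          rw [Finset.card_univ, Fintype.card_fin]
      _ ≤ ((Finset.range p).image (fun m => f^[m] i0)).card := Finset.card_le_card hsub
      _ ≤ (Finset.range p).card := Finset.card_image_le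
      _ = p := Finset.card_range p
  have hfn : f^[n] i0 = i0 := by
    have hcard : Fintype.card (Fin n) < Fintype.card (Fin (n+1)) := by
      simp
    obtain ⟨a, b, hab, heq⟩ :=
      Fintype.exists_ne_map_eq_of_card_lt (fun k : Fin (n+1) => f^[k.val] i0) hcard
    rcases Nat.lt_or_ge a.val b.val with h | h
    · have h2 : f^[a.val] (f^[b.val - a.val] i0) = f^[a.val] i0 := by
        rw [← Function.iterate_add_apply, Nat.add_sub_cancel' h.le]
        exact heq.symm
      have h3 : f^[b.val - a.val] i0 = i0 := (hinj.iterate a.val) h2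
      have h4 : n ≤ b.val - a.val := hperiod _ (by omega) h3
      have h5 : b.val - a.val = n := by have := b.isLt; omega
      rwa [h5] at h3
    · rcases Nat.lt_or_ge b.val a.val with h' | h'
      · have h2 : f^[b.val] (f^[a.val - b.val] i0) = f^[b.val] i0 := by
          rw [← Function.iterate_add_apply, Nat.add_sub_cancel' h'.le]
          exact heq
        have h3 : f^[a.val - b.val] i0 = i0 := (hinj.iterate b.val) h2
        have h4 : n ≤ a.val - b.val := hperiod _ (by omega) h3
        have h5 : a.val - b.val = n := by have := a.isLt; omega
        rwa [h5] at h3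
      · exact absurd (Fin.ext (by omega)) hab
  have hmodn : ∀ m, f^[m] i0 = f^[m % n] i0 := by
    intro m
    induction m using Nat.strong_induction_on with
    | _ m ih =>
      by_cases h : m < n
      · rw [Nat.mod_eq_of_lt h]
      · push_neg at h
        have h2 : m = (m - n) + n := by omega
        have h3 : m % n = (m - n) % n := by
          conv_lhs => rw [h2]
          rw [Nat.add_mod_right]
        have key : f^[m] i0 = f^[m - n] i0 := by
          conv_lhs => rw [h2]
          rw [Function.iterate_add_apply, hfn]
        rw [key, ih (m - n) (by omega), ← h3]
  set φ : Fin n → Fin n := fun k => f^[k.val] i0 with hφ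
  have hφinj : Function.Injective φ := by
    intro a b hab
    by_contra hne
    rcases Nat.lt_or_ge a.val b.val with h | h
    · have h2 : f^[a.val] (f^[b.val - a.val] i0) = f^[a.val] i0 := by
        rw [← Function.iterate_add_apply, Nat.add_sub_cancel' h.le]
        exact hab.symm
      have h3 := hperiod _ (by omega) ((hinj.iterate a.val) h2)
      have := b.isLt; omega
    · rcases Nat.lt_or_ge b.val a.val with h' | h'
      · have h2 : f^[b.val] (f^[a.val - b.val] i0) = f^[b.val] i0 := by
          rw [← Function.iterate_add_apply, Nat.add_sub_cancel' h'.le]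
          exact hab
        have h3 := hperiod _ (by omega) ((hinj.iterate b.val) h2)
        have := a.isLt; omega
      · exact hne (Fin.ext (by omega))
  have hφbij : Function.Bijective φ :=
    (Fintype.bijective_iff_injective_and_card φ).mpr ⟨hφinj, rfl⟩
  set E : Equiv.Perm (Fin n) := Equiv.ofBijective φ hφbij with hE
  refine ⟨E.symm, fun u v => ?_⟩
  have hu : φ (E.symm u) = u := E.apply_symm_apply u
  have hv : φ (E.symm v) = v := E.apply_symm_apply v
  set a := E.symm u with ha
  set b := E.symm v with hb
  have hstep : f u = φ ⟨(a.val + 1) % n, Nat.mod_lt _ (by omega)⟩ := by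
    rw [← hu, hφ]
    show f (f^[a.val] i0) = f^[(a.val + 1) % n] i0
    rw [← Function.iterate_succ_apply' f a.val i0, ← hmodn (a.val + 1)]
  constructor
  · intro hGuv
    have h2 : v = f u := (hGf u v).mp hGuv
    have h3 : φ b = φ ⟨(a.val + 1) % n, Nat.mod_lt _ (by omega)⟩ := by
      rw [hv, h2, hstep]
    have h4 := hφinj h3
    show b.val = (a.val + 1) % n
    rw [h4]
  · intro hcyc
    have h3 : b = (⟨(a.val + 1) % n, Nat.mod_lt _ (by omega)⟩ : Fin n) := Fin.ext hcyc
    refine (hGf u v).mpr ?_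
    rw [← hv, h3, ← hstep]
end Cycle

end Helpers


section AalphaFacts
variable {n : ℕ} {α : ℝ} {G : Fin n → Fin n → Prop}

lemma Aalpha_apply (i j : Fin n) :
    Aalpha α G i j = α * (Matrix.diagonal (fun i => (outdeg G i : ℝ))) i j +
      (1 - α) * (if G i j then (1:ℝ) else 0) := by
  simp [Aalpha, Matrix.add_apply, Matrix.smul_apply, smul_eq_mul]

lemma Aalpha_nonneg (hα0 : 0 ≤ α) (hα1 : α ≤ 1) (i j : Fin n) : 0 ≤ Aalpha α G i j := by
  rw [Aalpha_apply]
  refine add_nonneg (mul_nonneg hα0 ?_) (mul_nonneg (by linarith) ?_)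
  · by_cases h : i = j <;> simp [Matrix.diagonal, h]
  · split <;> norm_num

lemma rowSum_Aalpha (i : Fin n) : rowSum (Aalpha α G) i = (outdeg G i : ℝ) := by
  unfold rowSum
  simp only [Aalpha_apply]
  rw [Finset.sum_add_distrib, ← Finset.mul_sum, ← Finset.mul_sum]
  have h1 : ∑ j, (Matrix.diagonal (fun i => (outdeg G i : ℝ))) i j = (outdeg G i : ℝ) := by
    rw [Finset.sum_eq_single i (fun b _ hb => by simp [Matrix.diagonal_apply_ne' _ hb])
      (fun h => absurd (Finset.mem_univ i) h)]
    simp [Matrix.diagonal]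
  have h2 : ∑ j, (if G i j then (1:ℝ) else 0) = (outdeg G i : ℝ) := by
    rw [Finset.sum_boole, outdeg]
  rw [h1, h2]
  ring

lemma Aalpha_irred (hα1 : α < 1) (hGs : ∀ i, ¬ G i i) (hSC : SConn G) :
    Irred (Aalpha α G) := by
  intro i j
  refine Relation.ReflTransGen.mono ?_ i j (hSC i j)
  intro a b hab
  have hne : a ≠ b := fun hc => hGs a (hc ▸ hab)
  rw [Aalpha_apply, Matrix.diagonal_apply_ne _ hne, if_pos hab]
  intro hc
  have : (1:ℝ) - α = 0 := by linarith [hc]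
  linarith

end AalphaFacts

/-- `1 ≤ λ_α(G) ≤ n-1` for strongly connected `G`, with equality
characterizations: `n-1` iff `G` is complete, `1` iff `G` is the directed cycle. -/
theorem stmt3 {n : ℕ} (hn : 2 ≤ n) (α : ℝ) (hα0 : 0 ≤ α) (hα1 : α < 1)
    (G : Fin n → Fin n → Prop) (hGs : ∀ i, ¬ G i i) (hSC : SConn G) :
    1 ≤ lamAlpha α G ∧ lamAlpha α G ≤ (n : ℝ) - 1 ∧
      (lamAlpha α G = (n : ℝ) - 1 ↔ ∀ u v : Fin n, G u v ↔ u ≠ v) ∧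
      (lamAlpha α G = 1 ↔ DIso G (dirCycle n)) := by
  have hn0 : 0 < n := by omega
  have hMnn : ∀ i j, 0 ≤ Aalpha α G i j := Aalpha_nonneg hα0 hα1.le
  have hirr : Irred (Aalpha α G) := Aalpha_irred hα1 hGs hSC
  have h1row : ∀ i, (1:ℝ) ≤ rowSum (Aalpha α G) i := by
    intro i
    rw [rowSum_Aalpha]
    exact_mod_cast outdeg_pos hn hSC i
  have hSrow : ∀ i, rowSum (Aalpha α G) i ≤ (n:ℝ) - 1 := by
    intro i
    rw [rowSum_Aalpha]
    have h := outdeg_le hGs i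
    have h2 : (outdeg G i : ℝ) ≤ ((n - 1 : ℕ) : ℝ) := by exact_mod_cast h
    rw [Nat.cast_sub (by omega)] at h2
    simpa using h2
  have hlamdef : lamAlpha α G = specRad (Aalpha α G) := rfl
  have hlow : 1 ≤ lamAlpha α G := by
    rw [hlamdef]
    exact specRad_ge_min hMnn hirr hn0 le_rfl h1row
  have hup : lamAlpha α G ≤ (n:ℝ) - 1 := by
    rw [hlamdef]
    exact specRad_le_max hMnn hn0 hSrow
  refine ⟨hlow, hup, ⟨?_, ?_⟩, ⟨?_, ?_⟩⟩
  · -- λ = n-1 → complete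
    intro hρ
    by_contra hnc
    push_neg at hnc
    obtain ⟨u, v, huv⟩ := hnc
    have hkey : ¬ G u v ∧ u ≠ v := by
      rcases huv with ⟨hG, he⟩ | h
      · exact absurd (he ▸ hG) (hGs v)
      · exact h
    obtain ⟨hnG, hne⟩ := hkey
    have hdu : outdeg G u ≤ n - 2 := outdeg_lt hGs hne hnG
    have hrowu : rowSum (Aalpha α G) u < (n:ℝ) - 1 := by
      rw [rowSum_Aalpha]
      have h2 : (outdeg G u : ℝ) ≤ ((n - 2 : ℕ) : ℝ) := by exact_mod_cast hdu
      rw [Nat.cast_sub (by omega)] at h2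
      have : ((2:ℕ):ℝ) = 2 := by norm_num
      nlinarith [h2]
    have := specRad_lt_max hMnn hirr hn0 h1row hSrow hrowu
    rw [← hlamdef] at this
    linarith [hρ ▸ this]
  · -- complete → λ = n-1
    intro hcomp
    have hdeg : ∀ i, outdeg G i = n - 1 := outdeg_eq_of_complete hGs hcomp
    have hsmin : ∀ i, (n:ℝ) - 1 ≤ rowSum (Aalpha α G) i := by
      intro i
      rw [rowSum_Aalpha, hdeg i, Nat.cast_sub (by omega)]
      norm_num
    have hge : (n:ℝ) - 1 ≤ lamAlpha α G := by
      rw [hlamdef]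
      refine specRad_ge_min hMnn hirr hn0 ?_ hsmin
      have : (2:ℝ) ≤ (n:ℝ) := by exact_mod_cast hn
      linarith
    linarith [hup, hge]
  · -- λ = 1 → cycle
    intro hρ
    have hdeg : ∀ i, outdeg G i = 1 := by
      intro i
      by_contra hne
      have h2 : 2 ≤ outdeg G i := by
        have := outdeg_pos hn hSC i
        omega
      have hrowi : (1:ℝ) < rowSum (Aalpha α G) i := by
        rw [rowSum_Aalpha]
        have h3 : (2:ℝ) ≤ (outdeg G i : ℝ) := by exact_mod_cast h2
        linarith
      have := specRad_gt_min hMnn hirr hn0 le_rfl h1row hrowi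
      rw [← hlamdef] at this
      linarith [hρ ▸ this]
    exact diso_cycle hn hGs hSC hdeg
  · -- cycle → λ = 1
    intro hdiso
    have hdeg : ∀ i, outdeg G i = 1 := outdeg_eq_one_of_diso (by omega) hdiso
    have hle : lamAlpha α G ≤ 1 := by
      rw [hlamdef]
      refine specRad_le_max hMnn hn0 ?_
      intro i
      rw [rowSum_Aalpha, hdeg i]
      norm_num
    linarith [hlow, hle]
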